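/- For every real α ≥ 0, every integer m ≥ 0, and every x ∈ [0,1], the function f_m(x) = x^{(m−1)/2}((m+1+α)x − m) satisfies |f_m(x)| ≤ 1 + α. -/

import Mathlib

open Real

/-- Key analytic lemma: for real `k ≥ 1` and `x ∈ [0,1]`,
`(2k+1) x^k (1-x) ≤ 1`. -/
lemma aux_key (k x : ℝ) (hk : 1 ≤ k) (hx0 : 0 ≤ x) (hx1 : x ≤ 1) :
    (2 * k + 1) * x ^ k * (1 - x) ≤ 1 := by
  have hk0 : (0:ℝ) < k := lt_of_lt_of_le one_pos hk
  have hk1 : (0:ℝ) < k + 1 := by linarith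
  set r : ℝ := k / (k + 1) with hr
  have hr0 : 0 < r := div_pos hk0 hk1
  have hr1 : r < 1 := (div_lt_one hk1).2 (by linarith)
  -- r ^ k ≤ 1/2
  have hrk : r ^ k ≤ 1 / 2 := by
    have h2 : (2:ℝ) ≤ (1 + 1 / k) ^ k := by
      have hb := one_add_mul_self_le_rpow_one_add (s := 1 / k)
        (by nlinarith [one_div_nonneg.2 hk0.le] : (-1:ℝ) ≤ 1 / k) hk
      have hkk : k * (1 / k) = 1 := by field_simp
      nlinarith [hb]
    have hrinv : r = (1 + 1 / k)⁻¹ := by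
      rw [hr]; field_simp
    have hpos : (0:ℝ) < 1 + 1 / k := by positivity
    rw [hrinv, Real.inv_rpow hpos.le]
    have := inv_anti₀ (by norm_num : (0:ℝ) < 2) h2
    simpa [one_div] using this
  rcases le_total x r with hxr | hxr
  · -- small x : x ≤ r
    rcases eq_or_lt_of_le hx0 with h0 | h0
    · rw [← h0, Real.zero_rpow hk0.ne']
      norm_num
    set t : ℝ := 1 - x / r with ht
    have ht0 : 0 ≤ t := by
      have : x / r ≤ 1 := (div_le_one hr0).2 hxr
      simp [ht]; linarith
    have ht1 : t < 1 := by
      have : 0 < x / r := div_pos h0 hr0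
      simp [ht]; linarith
    have hxt : x = r * (1 - t) := by
      rw [ht]; field_simp; ring
    -- (1-t)^k ≤ 1/(1+k*t)
    have hkt0 : (0:ℝ) < 1 + k * t := by nlinarith
    have hBer : 1 + k * t ≤ (1 + t) ^ k :=
      one_add_mul_self_le_rpow_one_add (by linarith) hk
    have hprod : (1 - t) ^ k * (1 + t) ^ k ≤ 1 := by
      rw [← Real.mul_rpow (by linarith) (by linarith)]
      exact Real.rpow_le_one (by nlinarith) (by nlinarith) hk0.le
    have h1t : (1 - t) ^ k ≤ 1 / (1 + k * t) := by
      have hp : (0:ℝ) < (1 + t) ^ k := Real.rpow_pos_of_pos (by linarith) k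
      rw [le_div_iff₀ hkt0]
      calc (1 - t) ^ k * (1 + k * t) ≤ (1 - t) ^ k * (1 + t) ^ k :=
            mul_le_mul_of_nonneg_left hBer (Real.rpow_nonneg (by linarith) k)
        _ ≤ 1 := hprod
    -- x^k ≤ (1/2) * (1/(1+k*t))
    have hxk : x ^ k ≤ (1/2) * (1 / (1 + k * t)) := by
      rw [hxt, Real.mul_rpow hr0.le (by linarith)]
      have h1 : r ^ k * (1 - t) ^ k ≤ (1/2) * (1 / (1 + k * t)) := by
        apply mul_le_mul hrk h1t (Real.rpow_nonneg (by linarith) k) (by norm_num)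
      exact h1
    -- (2k+1)(1-x) ≤ 2(1+k*t)
    have hx_eq : (k + 1) * x = k * (1 - t) := by
      rw [hxt, hr]; field_simp
    have hfac : (2 * k + 1) * (1 - x) ≤ 2 * (1 + k * t) := by
      have h6 : (2 * k + 1) * (1 - x) * (k + 1) ≤ 2 * (1 + k * t) * (k + 1) := by
        nlinarith [hx_eq, mul_nonneg hk0.le ht0]
      exact le_of_mul_le_mul_right h6 hk1
    calc (2 * k + 1) * x ^ k * (1 - x) = x ^ k * ((2 * k + 1) * (1 - x)) := by ring
      _ ≤ ((1/2) * (1 / (1 + k * t))) * (2 * (1 + k * t)) := by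
          apply mul_le_mul hxk hfac (by nlinarith) (by positivity)
      _ = 1 := by field_simp
  · -- large x : r ≤ x
    have hxpos : 0 < x := lt_of_lt_of_le hr0 hxr
    set t : ℝ := 1 - r / x with ht
    have ht0 : 0 ≤ t := by
      have : r / x ≤ 1 := (div_le_one hxpos).2 hxr
      simp [ht]; linarith
    have ht1 : t ≤ 1 := by
      have : 0 ≤ r / x := le_of_lt (div_pos hr0 hxpos)
      simp [ht]; linarith
    have hrt : r = x * (1 - t) := by
      rw [ht]; field_simp; ring
    have hBer : 1 - k * t ≤ (1 - t) ^ k := by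
      have := one_add_mul_self_le_rpow_one_add (s := -t) (by linarith) hk
      have e1 : 1 + k * (-t) = 1 - k * t := by ring
      have e2 : (1:ℝ) + -t = 1 - t := by ring
      rw [e1, e2] at this
      exact this
    -- x^k * (1 - k*t) ≤ r^k
    have h1 : x ^ k * (1 - k * t) ≤ r ^ k := by
      calc x ^ k * (1 - k * t) ≤ x ^ k * (1 - t) ^ k :=
            mul_le_mul_of_nonneg_left hBer (Real.rpow_nonneg hx0 k)
        _ = r ^ k := by rw [hrt, Real.mul_rpow hx0 (by linarith)]
    -- (k+1)(1-x) ≤ 1 - k*t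
    have hxt2 : (k + 1) * (x * t) = (k + 1) * x - k := by
      rw [ht, hr]; field_simp
    have h2 : (k + 1) * (1 - x) ≤ 1 - k * t := by
      nlinarith [hxt2, sq_nonneg ((k + 1) * x - k), hxpos, mul_pos hxpos hxpos]
    -- combine
    have h3 : x ^ k * (1 - x) ≤ 1 / (2 * (k + 1)) := by
      have h4 : (k + 1) * (x ^ k * (1 - x)) ≤ 1 / 2 := by
        calc (k + 1) * (x ^ k * (1 - x)) = x ^ k * ((k + 1) * (1 - x)) := by ring
          _ ≤ x ^ k * (1 - k * t) :=
              mul_le_mul_of_nonneg_left h2 (Real.rpow_nonneg hx0 k)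
          _ ≤ r ^ k := h1
          _ ≤ 1 / 2 := hrk
      rw [le_div_iff₀ (by positivity)]
      linarith [h4]
    have hnn : 0 ≤ x ^ k * (1 - x) :=
      mul_nonneg (Real.rpow_nonneg hx0 k) (by linarith)
    calc (2 * k + 1) * x ^ k * (1 - x) = (2 * k + 1) * (x ^ k * (1 - x)) := by ring
      _ ≤ (2 * (k + 1)) * (1 / (2 * (k + 1))) := by
          apply mul_le_mul (by linarith) h3 hnn (by positivity)
      _ = 1 := by field_simp

/-- For `m ≥ 1` and `x ∈ [0,1]`, `m * x^((m-1)/2) * (1-x) ≤ 1`. -/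
lemma key_ineq (m : ℕ) (hm : 1 ≤ m) (x : ℝ) (hx0 : 0 ≤ x) (hx1 : x ≤ 1) :
    (m : ℝ) * x ^ (((m : ℝ) - 1) / 2) * (1 - x) ≤ 1 := by
  match m, hm with
  | 1, _ =>
    norm_num
    linarith
  | 2, _ =>
    have he : (((2:ℕ) : ℝ) - 1) / 2 = (1/2 : ℝ) := by norm_num
    rw [he]
    set a : ℝ := x ^ (1/2 : ℝ) with ha
    have ha0 : 0 ≤ a := Real.rpow_nonneg hx0 _
    have ha1 : a ≤ 1 := Real.rpow_le_one hx0 hx1 (by norm_num)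
    have ha2 : a ^ 2 = x := by
      rw [ha, ← Real.rpow_natCast (x ^ (1/2:ℝ)) 2, ← Real.rpow_mul hx0]
      norm_num
    rw [← ha2]
    push_cast
    nlinarith [mul_nonneg ha0 (sq_nonneg (2*a - 1)), sq_nonneg (a - 5/8)]
  | (n+3), _ =>
    set k : ℝ := (((n+3 : ℕ) : ℝ) - 1) / 2 with hkdef
    have hk : 1 ≤ k := by
      rw [hkdef]; push_cast
      nlinarith [Nat.cast_nonneg (α := ℝ) n]
    have hm' : ((n+3 : ℕ) : ℝ) = 2 * k + 1 := by
      rw [hkdef]; push_cast; ring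
    rw [hm']
    exact aux_key k x hk hx0 hx1

theorem abs_fm_le (α : ℝ) (hα : 0 ≤ α) (m : ℕ) (x : ℝ) (hx : x ∈ Set.Icc (0 : ℝ) 1) :
    |x ^ (((m : ℝ) - 1) / 2) * (((m : ℝ) + 1 + α) * x - (m : ℝ))| ≤ 1 + α := by
  obtain ⟨hx0, hx1⟩ := hx
  rcases Nat.eq_zero_or_pos m with rfl | hm
  · -- m = 0
    rcases eq_or_lt_of_le hx0 with h0 | h0
    · rw [← h0]
      norm_num
      linarith
    · have he : (((0:ℕ) : ℝ) - 1) / 2 = (-(1/2) : ℝ) := by norm_num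
      push_cast
      have hxe : x ^ ((0 - 1) / 2 : ℝ) * ((0 + 1 + α) * x - 0)
          = (1 + α) * x ^ (1/2 : ℝ) := by
        have : ((0:ℝ) - 1) / 2 = -(1/2 : ℝ) := by norm_num
        rw [this]
        have hsplit : x ^ (-(1/2) : ℝ) * x = x ^ (1/2 : ℝ) := by
          nth_rewrite 2 [← Real.rpow_one x]
          rw [← Real.rpow_add h0]
          norm_num
        calc x ^ (-(1/2) : ℝ) * ((0 + 1 + α) * x - 0)
            = (1 + α) * (x ^ (-(1/2) : ℝ) * x) := by ring
          _ = (1 + α) * x ^ (1/2 : ℝ) := by rw [hsplit]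
      rw [hxe, abs_of_nonneg (by positivity)]
      have h1 : x ^ (1/2 : ℝ) ≤ 1 := Real.rpow_le_one hx0 hx1 (by norm_num)
      nlinarith
  · -- m ≥ 1
    have hk0 : 0 ≤ (((m:ℝ) - 1) / 2) := by
      have : (1:ℝ) ≤ (m:ℝ) := by exact_mod_cast hm
      linarith
    have hxk0 : 0 ≤ x ^ (((m:ℝ) - 1) / 2) := Real.rpow_nonneg hx0 _
    have hxk1 : x ^ (((m:ℝ) - 1) / 2) ≤ 1 := Real.rpow_le_one hx0 hx1 hk0
    rw [abs_le]
    constructor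
    · -- lower bound
      have hstep : x ^ (((m:ℝ) - 1) / 2) * ((m:ℝ) - ((m:ℝ) + 1 + α) * x)
          ≤ x ^ (((m:ℝ) - 1) / 2) * ((m:ℝ) * (1 - x)) := by
        apply mul_le_mul_of_nonneg_left _ hxk0
        nlinarith [mul_nonneg hα hx0]
      have hkey := key_ineq m hm x hx0 hx1
      nlinarith [hstep, hkey]
    · -- upper bound
      rcases le_total (((m:ℝ) + 1 + α) * x) (m:ℝ) with h | h
      · have : x ^ (((m:ℝ) - 1) / 2) * (((m:ℝ) + 1 + α) * x - (m:ℝ)) ≤ 0 :=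
          mul_nonpos_of_nonneg_of_nonpos hxk0 (by linarith)
        linarith
      · calc x ^ (((m:ℝ) - 1) / 2) * (((m:ℝ) + 1 + α) * x - (m:ℝ))
            ≤ 1 * (((m:ℝ) + 1 + α) * x - (m:ℝ)) :=
              mul_le_mul_of_nonneg_right hxk1 (by linarith)
          _ = ((m:ℝ) + 1 + α) * x - (m:ℝ) := by ring
          _ ≤ 1 + α := by nlinarith
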